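/- If X is a proper geodesic metric space and A ⊆ X is a nonempty closed subset, then the quotient metric space X/A is geodesic. -/

import Mathlib

open scoped ENNReal
open Filter Metric Set

/-- The bottleneck (pre)distance between two `ℕ`-indexed representatives of persistence
diagrams on the metric pair `(X, A)`: the infimum, over countable multisets `α`, `β` of points
of `A` adjoined to `f` and `g` respectively and over bijections between the resulting
multisets, of the supremum displacement. -/
noncomputable def bdist {X : Type*} [MetricSpace X] (A : Set X) (f g : ℕ → X) : ℝ≥0∞ :=
  ⨅ (α : ℕ → X) (_ : ∀ n, α n ∈ A) (β : ℕ → X) (_ : ∀ n, β n ∈ A)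
    (e : (ℕ ⊕ ℕ) ≃ (ℕ ⊕ ℕ)), ⨆ n : ℕ ⊕ ℕ, edist (Sum.elim f α n) (Sum.elim g β (e n))

/-- Two representatives define the same persistence diagram on `(X, A)` iff their restrictions
away from `A` agree as multisets, i.e. there is a value-preserving bijection between the index
sets of points outside `A`. -/
def DiagEquiv {X : Type*} [MetricSpace X] (A : Set X) (f g : ℕ → X) : Prop :=
  ∃ e : {n : ℕ // f n ∉ A} ≃ {n : ℕ // g n ∉ A}, ∀ p, g (e p).1 = f p.1

/-- A representative belongs to `D_∞(X, A)` iff it is at finite bottleneck distance from the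
empty diagram (represented by any multiset of points of `A`). -/
def IsDiagram {X : Type*} [MetricSpace X] (A : Set X) (f : ℕ → X) : Prop :=
  ∃ g : ℕ → X, (∀ n, g n ∈ A) ∧ bdist A f g ≠ ⊤

/-- The quotient metric of `X/A`, read on representatives in `X`:
`d_{X/A}(x,y) = min (d(x,y)) (d(x,A) + d(y,A))`. -/
noncomputable def qdist {X : Type*} [MetricSpace X] (A : Set X) (x y : X) : ℝ :=
  min (dist x y) (Metric.infDist x A + Metric.infDist y A)


private lemma qdist_comm' {X : Type*} [MetricSpace X] (A : Set X) (x y : X) :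
    qdist A x y = qdist A y x := by
  unfold qdist; rw [dist_comm, add_comm]

/-- If `X` is a proper geodesic metric space and `A ⊆ X` is nonempty and closed, then the
quotient metric space `X/A` is geodesic. -/
theorem stmt_17 {X : Type*} [MetricSpace X] [ProperSpace X]
    (hXgeo : ∀ x y : X, ∃ γ : ℝ → X, γ 0 = x ∧ γ 1 = y ∧
      ∀ s t : ℝ, s ∈ Set.Icc (0:ℝ) 1 → t ∈ Set.Icc (0:ℝ) 1 →
        dist (γ s) (γ t) = |s - t| * dist x y)
    (A : Set X) (hA : A.Nonempty) (hAcl : IsClosed A) :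
    ∀ x y : X, ∃ γ : ℝ → X,
      (γ 0 = x ∨ (γ 0 ∈ A ∧ x ∈ A)) ∧ (γ 1 = y ∨ (γ 1 ∈ A ∧ y ∈ A)) ∧
      ∀ s t : ℝ, s ∈ Set.Icc (0:ℝ) 1 → t ∈ Set.Icc (0:ℝ) 1 →
        qdist A (γ s) (γ t) = |s - t| * qdist A x y := by
  intro x y
  set a := Metric.infDist x A with ha
  set b := Metric.infDist y A with hb
  have ha0 : 0 ≤ a := Metric.infDist_nonneg
  have hb0 : 0 ≤ b := Metric.infDist_nonneg
  rcases le_or_gt (dist x y) (a + b) with hcase | hcase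
  · -- the geodesic in X works
    obtain ⟨γ, hγ0, hγ1, hγd⟩ := hXgeo x y
    refine ⟨γ, Or.inl hγ0, Or.inl hγ1, ?_⟩
    have hq : qdist A x y = dist x y := by
      unfold qdist; rw [← ha, ← hb]; exact min_eq_left hcase
    have key : ∀ s t : ℝ, s ∈ Icc (0:ℝ) 1 → t ∈ Icc (0:ℝ) 1 → s ≤ t →
        qdist A (γ s) (γ t) = (t - s) * dist x y := by
      intro s t hs ht hst
      have hxs : dist x (γ s) = s * dist x y := by
        have h := hγd 0 s ⟨le_refl 0, zero_le_one⟩ hs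
        rw [hγ0, abs_of_nonpos (by linarith [hs.1]), neg_sub, sub_zero] at h
        exact h
      have hyt : dist y (γ t) = (1 - t) * dist x y := by
        have h := hγd 1 t ⟨zero_le_one, le_refl 1⟩ ht
        rw [hγ1, abs_of_nonneg (by linarith [ht.2])] at h
        exact h
      have h1 : a ≤ Metric.infDist (γ s) A + dist x (γ s) :=
        Metric.infDist_le_infDist_add_dist
      have h2 : b ≤ Metric.infDist (γ t) A + dist y (γ t) :=
        Metric.infDist_le_infDist_add_dist
      rw [hxs] at h1
      rw [hyt] at h2
      have hd : dist (γ s) (γ t) = (t - s) * dist x y := by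
        rw [hγd s t hs ht, abs_of_nonpos (by linarith), neg_sub]
      have hle : (t - s) * dist x y ≤
          Metric.infDist (γ s) A + Metric.infDist (γ t) A := by linarith
      unfold qdist
      rw [hd]
      exact min_eq_left hle
    intro s t hs ht
    rcases le_total s t with h | h
    · rw [key s t hs ht h, hq, abs_of_nonpos (by linarith), neg_sub]
    · rw [qdist_comm', key t s ht hs h, hq, abs_of_nonneg (by linarith)]
  · rcases (add_nonneg ha0 hb0).eq_or_lt with hab | hab
    · -- a + b = 0 : both endpoints in A, constant path works
      have haz : a = 0 := by linarith
      have hbz : b = 0 := by linarith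
      have hx : x ∈ A := (hAcl.mem_iff_infDist_zero hA).2 haz
      have hy : y ∈ A := (hAcl.mem_iff_infDist_zero hA).2 hbz
      refine ⟨fun _ => x, Or.inl rfl, Or.inr ⟨hx, hy⟩, ?_⟩
      intro s t _ _
      have h1 : qdist A x x = 0 := by
        simp [qdist, Metric.infDist_zero_of_mem hx]
      have h2 : qdist A x y = 0 := by
        unfold qdist; rw [← ha, ← hb, haz, hbz]
        simp [min_eq_right dist_nonneg]
      simp only [h1, h2, mul_zero]
    · -- a + b > 0 : concatenate geodesics x → p and q → y
      have hABne : a + b ≠ 0 := ne_of_gt hab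
      obtain ⟨p, hpA, hpd⟩ := hAcl.exists_infDist_eq_dist hA x
      obtain ⟨q, hqA, hqd⟩ := hAcl.exists_infDist_eq_dist hA y
      rw [← ha] at hpd
      rw [← hb] at hqd
      obtain ⟨γ₁, h10, h11, h1d⟩ := hXgeo x p
      obtain ⟨γ₂, h20, h21, h2d⟩ := hXgeo q y
      rw [← hpd] at h1d
      rw [dist_comm, ← hqd] at h2d
      obtain ⟨m, hmdef⟩ : ∃ m : ℝ, m = a / (a + b) := ⟨_, rfl⟩
      have hm0 : 0 ≤ m := hmdef ▸ div_nonneg ha0 hab.le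
      have hm1 : m ≤ 1 := hmdef ▸ (div_le_one hab).2 (by linarith)
      have hma : m * (a + b) = a := by rw [hmdef]; exact div_mul_cancel₀ a hABne
      have hmb : (1 - m) * (a + b) = b := by linear_combination -hma
      -- key computations on the first leg
      have hC1 : ∀ s : ℝ, 0 ≤ s → s ≤ m →
          dist x (γ₁ (s / m)) = s * (a + b) ∧
          Metric.infDist (γ₁ (s / m)) A = a - s * (a + b) := by
        intro s hs0 hsm
        rcases hm0.eq_or_lt with hmz | hmz
        · have hsz : s = 0 := le_antisymm (hmz ▸ hsm) hs0
          have haz : a = 0 := by rw [← hma, ← hmz, zero_mul]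
          subst hsz
          rw [zero_div, h10]
          constructor
          · simp
          · rw [← ha, haz]; ring
        · have hu0 : 0 ≤ s / m := div_nonneg hs0 hmz.le
          have hu1 : s / m ≤ 1 := (div_le_one hmz).2 hsm
          have harith : s / m * a = s * (a + b) := by
            rw [div_mul_eq_mul_div, div_eq_iff (ne_of_gt hmz)]
            linear_combination -s * hma
          have hds : dist x (γ₁ (s / m)) = s * (a + b) := by
            have h := h1d 0 (s / m) ⟨le_refl 0, zero_le_one⟩ ⟨hu0, hu1⟩
            rw [h10, abs_of_nonpos (by linarith), neg_sub, sub_zero] at h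
            rw [h, harith]
          refine ⟨hds, le_antisymm ?_ ?_⟩
          · have hdp : dist (γ₁ (s / m)) p = a - s * (a + b) := by
              have h := h1d (s / m) 1 ⟨hu0, hu1⟩ ⟨zero_le_one, le_refl 1⟩
              rw [h11] at h
              rw [h, abs_of_nonpos (by linarith), neg_sub, sub_mul, one_mul,
                harith]
            rw [← hdp]
            exact Metric.infDist_le_dist_of_mem hpA
          · have h := Metric.infDist_le_infDist_add_dist (x := x) (y := γ₁ (s / m)) (s := A)
            rw [← ha, hds] at h
            linarith
      -- key computations on the second leg
      have hC2 : ∀ t : ℝ, m < t → t ≤ 1 →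
          dist (γ₂ ((t - m) / (1 - m))) y = (1 - t) * (a + b) ∧
          Metric.infDist (γ₂ ((t - m) / (1 - m))) A = (t - m) * (a + b) := by
        intro t hmt ht1
        have hm1' : m < 1 := lt_of_lt_of_le hmt ht1
        have h1m : (0:ℝ) < 1 - m := by linarith
        have hu0 : 0 ≤ (t - m) / (1 - m) := div_nonneg (by linarith) h1m.le
        have hu1 : (t - m) / (1 - m) ≤ 1 := (div_le_one h1m).2 (by linarith)
        have harith : (t - m) / (1 - m) * b = (t - m) * (a + b) := by
          rw [div_mul_eq_mul_div, div_eq_iff (ne_of_gt h1m)]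
          linear_combination -(t - m) * hmb
        have harith' : (1 - (t - m) / (1 - m)) * b = (1 - t) * (a + b) := by
          rw [show 1 - (t - m) / (1 - m) = (1 - t) / (1 - m) by
            field_simp; ring, div_mul_eq_mul_div, div_eq_iff (ne_of_gt h1m)]
          linear_combination -(1 - t) * hmb
        have hdy : dist (γ₂ ((t - m) / (1 - m))) y = (1 - t) * (a + b) := by
          have h := h2d ((t - m) / (1 - m)) 1 ⟨hu0, hu1⟩ ⟨zero_le_one, le_refl 1⟩
          rw [h21] at h
          rw [h, abs_of_nonpos (by linarith), neg_sub, harith']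
        refine ⟨hdy, le_antisymm ?_ ?_⟩
        · have hdq : dist (γ₂ ((t - m) / (1 - m))) q = (t - m) * (a + b) := by
            have h := h2d ((t - m) / (1 - m)) 0 ⟨hu0, hu1⟩ ⟨le_refl 0, zero_le_one⟩
            rw [h20] at h
            rw [h, sub_zero, abs_of_nonneg hu0, harith]
          rw [← hdq]
          exact Metric.infDist_le_dist_of_mem hqA
        · have h := Metric.infDist_le_infDist_add_dist
            (x := y) (y := γ₂ ((t - m) / (1 - m))) (s := A)
          rw [← hb, dist_comm, hdy] at h
          linarith
      -- distances within each leg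
      have hD1 : ∀ s t : ℝ, 0 ≤ s → s ≤ t → t ≤ m →
          dist (γ₁ (s / m)) (γ₁ (t / m)) = (t - s) * (a + b) := by
        intro s t hs0 hst htm
        rcases hm0.eq_or_lt with hmz | hmz
        · have hsz : s = 0 := le_antisymm (by linarith [hmz ▸ htm]) hs0
          have htz : t = 0 := le_antisymm (hmz ▸ htm) (hsz ▸ hst)
          subst hsz; subst htz; simp
        · have harith : (t - s) / m * a = (t - s) * (a + b) := by
            rw [div_mul_eq_mul_div, div_eq_iff (ne_of_gt hmz)]
            linear_combination -(t - s) * hma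
          have h := h1d (s / m) (t / m)
            ⟨div_nonneg hs0 hmz.le, (div_le_one hmz).2 (hst.trans htm)⟩
            ⟨div_nonneg (hs0.trans hst) hmz.le, (div_le_one hmz).2 htm⟩
          rw [h, show s / m - t / m = -((t - s) / m) by ring, abs_neg,
            abs_of_nonneg (div_nonneg (by linarith) hmz.le), harith]
      have hD2 : ∀ s t : ℝ, m < s → s ≤ t → t ≤ 1 →
          dist (γ₂ ((s - m) / (1 - m))) (γ₂ ((t - m) / (1 - m)))
            = (t - s) * (a + b) := by
        intro s t hms hst ht1
        have h1m : (0:ℝ) < 1 - m := by linarith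
        have harith : (t - s) / (1 - m) * b = (t - s) * (a + b) := by
          rw [div_mul_eq_mul_div, div_eq_iff (ne_of_gt h1m)]
          linear_combination -(t - s) * hmb
        have h := h2d ((s - m) / (1 - m)) ((t - m) / (1 - m))
          ⟨div_nonneg (by linarith) h1m.le, (div_le_one h1m).2 (by linarith)⟩
          ⟨div_nonneg (by linarith) h1m.le, (div_le_one h1m).2 (by linarith)⟩
        rw [h, show (s - m) / (1 - m) - (t - m) / (1 - m) = -((t - s) / (1 - m)) by
            ring, abs_neg, abs_of_nonneg (div_nonneg (by linarith) h1m.le), harith]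
      refine ⟨fun s => if s ≤ m then γ₁ (s / m) else γ₂ ((s - m) / (1 - m)),
        ?_, ?_, ?_⟩
      · left
        show (if (0:ℝ) ≤ m then γ₁ (0 / m) else γ₂ ((0 - m) / (1 - m))) = x
        rw [if_pos hm0, zero_div, h10]
      · by_cases h1m : (1:ℝ) ≤ m
        · have hm : m = 1 := le_antisymm hm1 h1m
          right
          refine ⟨?_, ?_⟩
          · show (if (1:ℝ) ≤ m then γ₁ (1 / m) else γ₂ ((1 - m) / (1 - m))) ∈ A
            rw [if_pos h1m, hm, div_one, h11]
            exact hpA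
          · have hbz : b = 0 := by rw [← hmb, hm]; ring
            exact (hAcl.mem_iff_infDist_zero hA).2 hbz
        · left
          have : (1:ℝ) - m ≠ 0 := by
            have := not_le.1 h1m; intro h; linarith
          show (if (1:ℝ) ≤ m then γ₁ (1 / m) else γ₂ ((1 - m) / (1 - m))) = y
          rw [if_neg h1m, div_self this, h21]
      · have master : ∀ s t : ℝ, s ∈ Icc (0:ℝ) 1 → t ∈ Icc (0:ℝ) 1 → s ≤ t →
            qdist A (if s ≤ m then γ₁ (s / m) else γ₂ ((s - m) / (1 - m)))
              (if t ≤ m then γ₁ (t / m) else γ₂ ((t - m) / (1 - m)))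
              = (t - s) * (a + b) := by
          intro s t hs ht hst
          by_cases hsm : s ≤ m
          · by_cases htm : t ≤ m
            · rw [if_pos hsm, if_pos htm]
              obtain ⟨hds, his⟩ := hC1 s hs.1 hsm
              obtain ⟨hdt, hit⟩ := hC1 t ht.1 htm
              have hdd := hD1 s t hs.1 hst htm
              unfold qdist
              rw [hdd, his, hit, min_eq_left]
              nlinarith [mul_nonneg (sub_nonneg.2 htm) hab.le, hma]
            · rw [if_pos hsm, if_neg htm]
              obtain ⟨hds, his⟩ := hC1 s hs.1 hsm
              obtain ⟨hdt, hit⟩ := hC2 t (not_le.1 htm) ht.2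
              have htri := dist_triangle4 x (γ₁ (s / m))
                (γ₂ ((t - m) / (1 - m))) y
              unfold qdist
              rw [his, hit, min_eq_right]
              · linear_combination -hma
              · rw [hds, hdt] at htri
                linarith [hcase.le]
          · have htm : ¬ t ≤ m := fun h => hsm (hst.trans h)
            rw [if_neg hsm, if_neg htm]
            obtain ⟨hds, his⟩ := hC2 s (not_le.1 hsm) hs.2
            obtain ⟨hdt, hit⟩ := hC2 t (not_le.1 htm) ht.2
            have hdd := hD2 s t (not_le.1 hsm) hst ht.2
            unfold qdist
            rw [hdd, his, hit, min_eq_left]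
            nlinarith [mul_nonneg (sub_nonneg.2 (not_le.1 hsm).le) hab.le]
        intro s t hs ht
        have hqxy : qdist A x y = a + b := by
          unfold qdist; rw [← ha, ← hb]; exact min_eq_right hcase.le
        show qdist A (if s ≤ m then γ₁ (s / m) else γ₂ ((s - m) / (1 - m)))
          (if t ≤ m then γ₁ (t / m) else γ₂ ((t - m) / (1 - m)))
          = |s - t| * qdist A x y
        rcases le_total s t with h | h
        · rw [master s t hs ht h, hqxy, abs_of_nonpos (by linarith), neg_sub]
        · rw [qdist_comm', master t s ht hs h, hqxy, abs_of_nonneg (by linarith)]
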